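/- Let K ≥ 2 be an integer and a, b, M be nonnegative reals with a > 0, b·(K−1) < 2a, and 0 ≤ M ≤ a+b. Then K − (K+1)·M/(2(a+b)) ≤ 2·(K/2 − K·M/(2(2a+b))), i.e., the achievable load K − (K+1)M/(2(a+b)) is at most twice the cut-set lower bound K/2 − KM/(2(2a+b)). -/

import Mathlib

/-- For even-`K` order optimality: the achievable load `K − (K+1)M/(2(a+b))` is at most
twice the cut-set lower bound `K/2 − KM/(2(2a+b))`. -/
theorem stmt_6 (K : ℕ) (hK : 2 ≤ K) (a b M : ℝ) (ha : 0 < a) (hb : 0 ≤ b) (hM : 0 ≤ M)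
    (hreg : b * ((K : ℝ) - 1) < 2 * a) (hMub : M ≤ a + b) :
    (K : ℝ) - ((K : ℝ) + 1) * M / (2 * (a + b)) ≤
      2 * ((K : ℝ) / 2 - (K : ℝ) * M / (2 * (2 * a + b))) := by
  have hab : (0:ℝ) < a + b := by linarith
  have hab2 : (0:ℝ) < 2 * a + b := by linarith
  have h : (K:ℝ) * M / (2 * a + b) ≤ ((K:ℝ) + 1) * M / (2 * (a + b)) := by
    rw [div_le_div_iff₀ hab2 (by linarith)]
    nlinarith [mul_nonneg hM (by linarith : (0:ℝ) ≤ 2 * a - b * ((K:ℝ) - 1))]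
  have : 2 * ((K:ℝ) * M / (2 * (2 * a + b))) = (K:ℝ) * M / (2 * a + b) := by
    field_simp
  linarith
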